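/- Let X₊, X₋ be finite subsets of ℝⁿ and f{g(x)} = ⟨a, max(0, W₂ᵀ g(x) + b₂)⟩ + c with g(x) = max(0, W₁ᵀx + b₁), where a ⪯ 0, c ≥ 0, W₂ ⪯ 0, b₂ ⪰ 0, and f{g(x)} > 0 on X₊, f{g(x)} < 0 on X₋. For I ⊆ {1,...,l₂} define f_I{g(x)} = ∑_{i∈I} a_i(⟨w_i, g(x)⟩ + b_i) + c and X₋^I = {x ∈ X₋ : f_I{g(x)} < 0}. Then X₋ is the union over all I of X₋^I, f_I{g(x)} > 0 on X₊ and f_I{g(x)} < 0 on X₋^I, and CH(X₋^I) ∩ X₊ = ∅ for every I. -/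

import Mathlib

private lemma affine_relu_convex (n : ℕ) (w : Fin n → ℝ) (b : ℝ) :
    ConvexOn ℝ Set.univ (fun x : Fin n → ℝ => max 0 ((∑ k, w k * x k) + b)) := by
  have hlin : ConvexOn ℝ Set.univ (fun x : Fin n → ℝ => ∑ k, w k * x k) := by
    have := LinearMap.convexOn (𝕜 := ℝ)
      (f := { toFun := fun x : Fin n → ℝ => ∑ k, w k * x k
              map_add' := by intro x y; simp [mul_add, Finset.sum_add_distrib]
              map_smul' := by intro r x; simp [Finset.mul_sum, mul_comm, mul_assoc, mul_left_comm] })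
      convex_univ
    simpa using this
  have haff := hlin.add (convexOn_const b convex_univ)
  exact (convexOn_const (0:ℝ) convex_univ).sup haff

private lemma convexOn_finset_sum {ι : Type*} (s : Finset ι) {n : ℕ}
    (f : ι → (Fin n → ℝ) → ℝ) (hf : ∀ j ∈ s, ConvexOn ℝ Set.univ (f j)) :
    ConvexOn ℝ Set.univ (fun x => ∑ j ∈ s, f j x) := by
  induction s using Finset.cons_induction with
  | empty => simpa using convexOn_const (0:ℝ) convex_univ
  | cons j s hj ih =>
    simp only [Finset.sum_cons]
    exact (hf j (Finset.mem_cons_self j s)).add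
      (ih fun i hi => hf i (Finset.mem_cons_of_mem hi))

/-- Decomposition of the negative set by a two-hidden-layer sign-constrained separator:
with `g(x) = max(0, W₁ᵀx + b₁)`, each piece `Xm^I = {x ∈ Xm : f_I{g(x)} < 0}` covers `Xm`
as `I` ranges over the subsets of the top hidden units, `f_I{g(·)}` is positive on `Xp` and
negative on `Xm^I`, and each `Xm^I` is convexly separable from `Xp`. -/
theorem two_hidden_layer_decomposition (n l1 l2 : ℕ)
    (W1 : Fin l1 → Fin n → ℝ) (b1 : Fin l1 → ℝ)
    (W2 : Fin l1 → Fin l2 → ℝ) (b2 : Fin l2 → ℝ) (a : Fin l2 → ℝ) (c : ℝ)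
    (ha : ∀ i, a i ≤ 0) (hc : 0 ≤ c) (hW2 : ∀ j i, W2 j i ≤ 0) (hb2 : ∀ i, 0 ≤ b2 i)
    (Xp Xm : Set (Fin n → ℝ)) (hfp : Xp.Finite) (hfm : Xm.Finite)
    (hp : ∀ x ∈ Xp, 0 <
      (∑ i, a i * max 0 ((∑ j, W2 j i * max 0 ((∑ k, W1 j k * x k) + b1 j)) + b2 i)) + c)
    (hm : ∀ x ∈ Xm,
      (∑ i, a i * max 0 ((∑ j, W2 j i * max 0 ((∑ k, W1 j k * x k) + b1 j)) + b2 i)) + c < 0) :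
    (Xm = ⋃ I : Finset (Fin l2),
        {x ∈ Xm | (∑ i ∈ I, a i * ((∑ j, W2 j i * max 0 ((∑ k, W1 j k * x k) + b1 j)) + b2 i)) + c < 0}) ∧
    (∀ I : Finset (Fin l2),
      (∀ x ∈ Xp, 0 <
        (∑ i ∈ I, a i * ((∑ j, W2 j i * max 0 ((∑ k, W1 j k * x k) + b1 j)) + b2 i)) + c) ∧
      (∀ x ∈ {x ∈ Xm | (∑ i ∈ I, a i * ((∑ j, W2 j i * max 0 ((∑ k, W1 j k * x k) + b1 j)) + b2 i)) + c < 0},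
        (∑ i ∈ I, a i * ((∑ j, W2 j i * max 0 ((∑ k, W1 j k * x k) + b1 j)) + b2 i)) + c < 0) ∧
      Disjoint
        (convexHull ℝ {x ∈ Xm | (∑ i ∈ I, a i * ((∑ j, W2 j i * max 0 ((∑ k, W1 j k * x k) + b1 j)) + b2 i)) + c < 0})
        Xp) := by
  set t : (Fin n → ℝ) → Fin l2 → ℝ :=
    fun x i => (∑ j, W2 j i * max 0 ((∑ k, W1 j k * x k) + b1 j)) + b2 i with ht
  -- positivity of F_I on Xp
  have hFp : ∀ (I : Finset (Fin l2)), ∀ x ∈ Xp,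
      0 < (∑ i ∈ I, a i * t x i) + c := by
    intro I x hx
    refine lt_of_lt_of_le (hp x hx) ?_
    have h1 : ∑ i, a i * max 0 (t x i) ≤ ∑ i ∈ I, a i * max 0 (t x i) := by
      have := Finset.sum_le_sum_of_subset_of_nonneg (f := fun i => -(a i * max 0 (t x i)))
        (I.subset_univ) (fun i _ _ => by
          simpa using neg_nonneg.2
            (mul_nonpos_of_nonpos_of_nonneg (ha i) (le_max_left _ _)))
      simp only [Finset.sum_neg_distrib] at this
      linarith
    have h2 : ∑ i ∈ I, a i * max 0 (t x i) ≤ ∑ i ∈ I, a i * t x i :=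
      Finset.sum_le_sum fun i _ =>
        mul_le_mul_of_nonpos_left (le_max_right _ _) (ha i)
    linarith
  -- convexity of F_I
  have hFconv : ∀ (I : Finset (Fin l2)),
      ConvexOn ℝ Set.univ (fun x => (∑ i ∈ I, a i * t x i) + c) := by
    intro I
    have key : ∀ x, (∑ i ∈ I, a i * t x i) + c =
        (∑ j, (∑ i ∈ I, a i * W2 j i) * max 0 ((∑ k, W1 j k * x k) + b1 j))
          + ((∑ i ∈ I, a i * b2 i) + c) := by
      intro x
      simp only [ht, mul_add, Finset.sum_add_distrib, Finset.mul_sum, Finset.sum_mul]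
      rw [Finset.sum_comm]
      ring_nf
    have : ConvexOn ℝ Set.univ (fun x : Fin n → ℝ =>
        (∑ j, (∑ i ∈ I, a i * W2 j i) * max 0 ((∑ k, W1 j k * x k) + b1 j))
          + ((∑ i ∈ I, a i * b2 i) + c)) := by
      refine ConvexOn.add ?_ (convexOn_const _ convex_univ)
      refine convexOn_finset_sum _ _ fun j _ => ?_
      have hcj : 0 ≤ ∑ i ∈ I, a i * W2 j i :=
        Finset.sum_nonneg fun i _ => by nlinarith [ha i, hW2 j i]
      simpa [smul_eq_mul] using (affine_relu_convex n (W1 j) (b1 j)).smul hcj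
    convert this using 2 with x
    · exact key x
  refine ⟨?_, fun I => ⟨hFp I, fun x hx => hx.2, ?_⟩⟩
  · ext x
    simp only [Set.mem_iUnion, Set.mem_setOf_eq]
    constructor
    · intro hx
      refine ⟨Finset.univ.filter (fun i => 0 < t x i), hx, ?_⟩
      have : ∑ i ∈ Finset.univ.filter (fun i => 0 < t x i), a i * t x i
          = ∑ i, a i * max 0 (t x i) := by
        rw [Finset.sum_filter]
        refine Finset.sum_congr rfl fun i _ => ?_
        by_cases h : 0 < t x i
        · simp [h, max_eq_right h.le]
        · simp [h, max_eq_left (not_lt.1 h)]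
      rw [this]
      exact hm x hx
    · rintro ⟨I, hx, -⟩; exact hx
  · -- disjointness of convex hull from Xp
    rw [Set.disjoint_left]
    intro x hxhull hxp
    have hsub : convexHull ℝ {x ∈ Xm | (∑ i ∈ I, a i * t x i) + c < 0} ⊆
        {x | (∑ i ∈ I, a i * t x i) + c < 0} := by
      apply convexHull_min
      · intro y hy; exact hy.2
      · have := (hFconv I).convex_lt 0
        simpa using this
    have := hsub hxhull
    exact absurd (hFp I x hxp) (by simpa using not_lt.2 this.le)
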